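/- Implicit function theorem for inf-harmonic functions: Let D ⊆ ℂ be a domain and let (a_j) be a finite or countable sequence of functions a_j : D → (0,1) such that log(1/a_j) is inf-harmonic on D for each j. Let c > 0 and define s(λ) := inf{ α > 0 : ∑_j a_j(λ)^α ≤ c } (with inf ∅ = ∞). Then either s ≡ 0 on D, or 1/s is an inf-harmonic function on D. -/

import Mathlib

open Complex Metric Set Filter
open scoped ENNReal

/-- A real-valued function is harmonic on `D` if near each point of `D`
it is the real part of a holomorphic function. -/
def HarmonicOnSet (f : ℂ → ℝ) (D : Set ℂ) : Prop :=
  ∀ z ∈ D, ∃ ε > 0, Metric.ball z ε ⊆ D ∧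
    ∃ F : ℂ → ℂ, DifferentiableOn ℂ F (Metric.ball z ε) ∧
      ∀ w ∈ Metric.ball z ε, f w = (F w).re

/-- `u` is inf-harmonic on `D`: the pointwise infimum of a nonempty family of
nonnegative harmonic functions on `D`. -/
def InfHarmonicOn (u : ℂ → ℝ) (D : Set ℂ) : Prop :=
  ∃ H : Set (ℂ → ℝ), H.Nonempty ∧
    (∀ h ∈ H, HarmonicOnSet h D) ∧
    (∀ h ∈ H, ∀ z ∈ D, 0 ≤ h z) ∧
    (∀ z ∈ D, u z = sInf ((fun h => h z) '' H))


lemma harmonicOnSet_zero {D : Set ℂ} (hD : IsOpen D) : HarmonicOnSet (fun _ => 0) D := by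
  intro z hz
  obtain ⟨ε, hε, hball⟩ := Metric.isOpen_iff.1 hD z hz
  exact ⟨ε, hε, hball, fun _ => 0, differentiableOn_const _, fun w _ => by simp⟩

lemma harmonicOnSet_add {D : Set ℂ} {f g : ℂ → ℝ} (hf : HarmonicOnSet f D)
    (hg : HarmonicOnSet g D) : HarmonicOnSet (fun z => f z + g z) D := by
  intro z hz
  obtain ⟨ε1, hε1, hb1, F1, hF1, hFe1⟩ := hf z hz
  obtain ⟨ε2, hε2, hb2, F2, hF2, hFe2⟩ := hg z hz
  refine ⟨min ε1 ε2, lt_min hε1 hε2,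
    (Metric.ball_subset_ball (min_le_left _ _)).trans hb1, fun w => F1 w + F2 w, ?_, ?_⟩
  · exact (hF1.mono (Metric.ball_subset_ball (min_le_left _ _))).add
      (hF2.mono (Metric.ball_subset_ball (min_le_right _ _)))
  · intro w hw
    show f w + g w = _
    rw [Complex.add_re, hFe1 w (Metric.ball_subset_ball (min_le_left _ _) hw),
      hFe2 w (Metric.ball_subset_ball (min_le_right _ _) hw)]

lemma harmonicOnSet_const_mul {D : Set ℂ} {f : ℂ → ℝ} (r : ℝ) (hf : HarmonicOnSet f D) :
    HarmonicOnSet (fun z => r * f z) D := by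
  intro z hz
  obtain ⟨ε, hε, hb, F, hF, hFe⟩ := hf z hz
  refine ⟨ε, hε, hb, fun w => (r : ℂ) * F w, hF.const_mul _, fun w hw => ?_⟩
  show r * f w = _
  rw [hFe w hw]
  simp [Complex.mul_re]

lemma harmonicOnSet_sum {ι : Type*} {D : Set ℂ} (hD : IsOpen D) (F : Finset ι) (w : ι → ℝ)
    (g : ι → ℂ → ℝ) (hg : ∀ j ∈ F, HarmonicOnSet (g j) D) :
    HarmonicOnSet (fun z => ∑ j ∈ F, w j * g j z) D := by
  classical
  induction F using Finset.induction_on with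
  | empty => simpa using harmonicOnSet_zero hD
  | insert _ _ hj ih =>
    rename_i a F
    simp only [Finset.sum_insert hj]
    exact harmonicOnSet_add (harmonicOnSet_const_mul _ (hg a (Finset.mem_insert_self _ _)))
      (ih fun j hjF => hg j (Finset.mem_insert_of_mem hjF))

lemma gibbs_ineq {ι : Type*} (F : Finset ι) (p q : ι → ℝ) (hp : ∀ j ∈ F, 0 ≤ p j)
    (hq : ∀ j ∈ F, 0 < q j) (hp1 : ∑ j ∈ F, p j = 1) :
    Real.exp ((∑ j ∈ F, p j * Real.log (q j)) - ∑ j ∈ F, p j * Real.log (p j))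
      ≤ ∑ j ∈ F, q j := by
  have key : Real.exp ((∑ j ∈ F, p j * Real.log (q j)) - ∑ j ∈ F, p j * Real.log (p j))
      = ∏ j ∈ F, (q j / p j) ^ (p j) := by
    rw [← Finset.sum_sub_distrib, Real.exp_sum]
    refine Finset.prod_congr rfl fun j hj => ?_
    rcases eq_or_lt_of_le (hp j hj) with h0 | h0
    · rw [← h0]; simp
    · rw [Real.rpow_def_of_pos (div_pos (hq j hj) h0),
        Real.log_div (ne_of_gt (hq j hj)) (ne_of_gt h0)]
      ring_nf
  rw [key]
  calc ∏ j ∈ F, (q j / p j) ^ (p j)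
      ≤ ∑ j ∈ F, p j * (q j / p j) :=
        Real.geom_mean_le_arith_mean_weighted F p _ hp hp1
          (fun j hj => div_nonneg (hq j hj).le (hp j hj))
    _ ≤ ∑ j ∈ F, q j := by
        refine Finset.sum_le_sum fun j hj => ?_
        rcases eq_or_lt_of_le (hp j hj) with h0 | h0
        · rw [← h0]; simpa using (hq j hj).le
        · rw [mul_comm, div_mul_cancel₀ _ (ne_of_gt h0)]

theorem infHarmonic_implicit_function {ι : Type*} [Countable ι]
    (D : Set ℂ) (hD : IsOpen D) (hDc : IsConnected D)
    (a : ι → ℂ → ℝ) (ha : ∀ j, ∀ z ∈ D, a j z ∈ Set.Ioo (0:ℝ) 1)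
    (hlog : ∀ j, InfHarmonicOn (fun z => Real.log (1 / a j z)) D)
    (c : ℝ) (hc : 0 < c)
    (s : ℂ → ℝ≥0∞)
    (hs : ∀ z ∈ D, s z = sInf ((fun α : ℝ => ENNReal.ofReal α) ''
        {α : ℝ | 0 < α ∧ ∑' j, ENNReal.ofReal (a j z ^ α) ≤ ENNReal.ofReal c})) :
    (∀ z ∈ D, s z = 0) ∨ InfHarmonicOn (fun z => ((s z)⁻¹).toReal) D := by
  classical
  have hupos : ∀ j, ∀ z ∈ D, 0 < Real.log (1 / a j z) := fun j z hz =>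
    Real.log_pos (one_lt_one_div (ha j z hz).1 (ha j z hz).2)
  have hsumchar : ∀ z ∈ D, ∀ α : ℝ,
      ((∑' j, ENNReal.ofReal (a j z ^ α)) ≤ ENNReal.ofReal c ↔
        ∀ F : Finset ι, ∑ j ∈ F, a j z ^ α ≤ c) := by
    intro z hz α
    rw [ENNReal.tsum_eq_iSup_sum, iSup_le_iff]
    have hnn : ∀ F : Finset ι, (∑ j ∈ F, ENNReal.ofReal (a j z ^ α))
        = ENNReal.ofReal (∑ j ∈ F, a j z ^ α) := fun F =>
      (ENNReal.ofReal_sum_of_nonneg fun j _ => Real.rpow_nonneg (ha j z hz).1.le α).symm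
    constructor
    · intro h F
      have h2 := h F
      rwa [hnn F, ENNReal.ofReal_le_ofReal_iff hc.le] at h2
    · intro h F
      rw [hnn F, ENNReal.ofReal_le_ofReal_iff hc.le]
      exact h F
  have key1 : ∀ z ∈ D, ∀ (F : Finset ι) (p : ι → ℝ), (∀ j ∈ F, 0 ≤ p j) →
      (∑ j ∈ F, p j = 1) → ∀ α : ℝ, (∑ j ∈ F, a j z ^ α ≤ c) →
      (-∑ j ∈ F, p j * Real.log (p j)) - Real.log c
        ≤ α * ∑ j ∈ F, p j * Real.log (1 / a j z) := by
    intro z hz F p hp hp1 α hα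
    have hq : ∀ j ∈ F, 0 < a j z ^ α := fun j hj => Real.rpow_pos_of_pos (ha j z hz).1 α
    have hgb := (gibbs_ineq F p (fun j => a j z ^ α) hp hq hp1).trans hα
    have hlogle := (Real.le_log_iff_exp_le hc).2 hgb
    have e1 : ∑ j ∈ F, p j * Real.log (a j z ^ α)
        = -(α * ∑ j ∈ F, p j * Real.log (1 / a j z)) := by
      rw [Finset.mul_sum, ← Finset.sum_neg_distrib]
      refine Finset.sum_congr rfl fun j hj => ?_
      rw [Real.log_rpow (ha j z hz).1, one_div, Real.log_inv]
      ring
    rw [e1] at hlogle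
    linarith
  by_cases hcard : ∀ Fs : Finset ι, (Fs.card : ℝ) ≤ c
  · left
    intro z hz
    have hle : ∀ α : ℝ, 0 < α → s z ≤ ENNReal.ofReal α := by
      intro α hα
      rw [hs z hz]
      refine sInf_le ⟨α, ⟨hα, ?_⟩, rfl⟩
      rw [hsumchar z hz α]
      intro F
      calc ∑ j ∈ F, a j z ^ α ≤ ∑ j ∈ F, (1:ℝ) := Finset.sum_le_sum fun j hj =>
            Real.rpow_le_one (ha j z hz).1.le (ha j z hz).2.le hα.le
        _ = F.card := by simp
        _ ≤ c := hcard F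
    have hneTop : s z ≠ ⊤ := by
      intro h
      have h1 := hle 1 one_pos
      rw [h, top_le_iff] at h1
      exact ENNReal.ofReal_ne_top h1
    by_contra hne
    have ht : 0 < (s z).toReal := ENNReal.toReal_pos hne hneTop
    have h2 := hle ((s z).toReal / 2) (by linarith)
    have h3 : (s z).toReal ≤ (s z).toReal / 2 := by
      have h4 := ENNReal.toReal_mono ENNReal.ofReal_ne_top h2
      rwa [ENNReal.toReal_ofReal (by linarith)] at h4
    linarith
  · push_neg at hcard
    obtain ⟨F0, hF0⟩ := hcard
    right
    choose 𝓗 hne𝓗 hharm hnonneg heq0 using hlog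
    have heq : ∀ j, ∀ z ∈ D, Real.log (1 / a j z) = sInf ((fun h => h z) '' 𝓗 j) :=
      fun j z hz => heq0 j z hz
    have hbddB : ∀ j, ∀ z ∈ D, BddBelow ((fun h => h z) '' 𝓗 j) := fun j z hz =>
      ⟨0, fun y hy => by obtain ⟨g, hg, rfl⟩ := hy; exact hnonneg j g hg z hz⟩
    have hub : ∀ j, ∀ z ∈ D, ∀ g ∈ 𝓗 j, Real.log (1 / a j z) ≤ g z := by
      intro j z hz g hg
      rw [heq j z hz]
      exact csInf_le (hbddB j z hz) ⟨g, hg, rfl⟩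
    have happrox : ∀ j, ∀ z ∈ D, ∀ δ : ℝ, 0 < δ →
        ∃ g ∈ 𝓗 j, g z < Real.log (1 / a j z) + δ := by
      intro j z hz δ hδ
      have h1 : sInf ((fun h => h z) '' 𝓗 j) < Real.log (1 / a j z) + δ := by
        rw [← heq j z hz]; linarith
      obtain ⟨y, ⟨g, hg, rfl⟩, hy⟩ := (csInf_lt_iff (hbddB j z hz) ((hne𝓗 j).image _)).1 h1
      exact ⟨g, hg, hy⟩
    set 𝓚 : Set (ℂ → ℝ) := { h | ∃ (F : Finset ι) (p : ι → ℝ) (g : ι → ℂ → ℝ),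
      (∀ j ∈ F, 0 ≤ p j) ∧ (∑ j ∈ F, p j = 1) ∧
      Real.log c < -∑ j ∈ F, p j * Real.log (p j) ∧ (∀ j ∈ F, g j ∈ 𝓗 j) ∧
      h = fun z => (∑ j ∈ F, p j * g j z) /
        ((-∑ j ∈ F, p j * Real.log (p j)) - Real.log c) } with h𝓚def
    have hF0ne : F0.Nonempty := by
      rcases F0.eq_empty_or_nonempty with h | h
      · exfalso
        rw [h] at hF0
        simp only [Finset.card_empty, Nat.cast_zero] at hF0
        linarith
      · exact h
    have hcard0 : 0 < (F0.card : ℝ) := lt_trans hc hF0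
    have hcard0' : (F0.card : ℝ) ≠ 0 := ne_of_gt hcard0
    have hentF0 : -∑ j ∈ F0, ((F0.card:ℝ)⁻¹) * Real.log ((F0.card:ℝ)⁻¹)
        = Real.log (F0.card : ℝ) := by
      rw [Finset.sum_const, nsmul_eq_mul, Real.log_inv]
      field_simp
    have hsumF0 : ∑ _j ∈ F0, ((F0.card:ℝ)⁻¹) = 1 := by
      rw [Finset.sum_const, nsmul_eq_mul]
      field_simp
    have h𝓚ne : 𝓚.Nonempty := by
      refine ⟨_, F0, fun _ => (F0.card:ℝ)⁻¹, fun j => (hne𝓗 j).some,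
        fun j _ => by positivity, hsumF0, ?_, fun j _ => (hne𝓗 j).some_mem, rfl⟩
      rw [hentF0]
      exact Real.log_lt_log hc hF0
    have h𝓚harm : ∀ h ∈ 𝓚, HarmonicOnSet h D := by
      rintro h ⟨F, p, g, hp, hp1, hent, hgmem, rfl⟩
      have hrw : (fun z => (∑ j ∈ F, p j * g j z) /
            ((-∑ j ∈ F, p j * Real.log (p j)) - Real.log c))
          = fun z => ∑ j ∈ F,
            (p j / ((-∑ j ∈ F, p j * Real.log (p j)) - Real.log c)) * g j z := by
        funext z
        rw [Finset.sum_div]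
        exact Finset.sum_congr rfl fun j _ => by ring
      rw [hrw]
      exact harmonicOnSet_sum hD F _ g fun j hj => hharm j (g j) (hgmem j hj)
    have h𝓚nonneg : ∀ h ∈ 𝓚, ∀ z ∈ D, 0 ≤ h z := by
      rintro h ⟨F, p, g, hp, hp1, hent, hgmem, rfl⟩ z hz
      have hK : 0 < (-∑ j ∈ F, p j * Real.log (p j)) - Real.log c := sub_pos.2 hent
      exact div_nonneg (Finset.sum_nonneg fun j hj => mul_nonneg (hp j hj)
        (hnonneg j (g j) (hgmem j hj) z hz)) hK.le
    have hspos : ∀ z ∈ D, 0 < s z := by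
      intro z hz
      have hGupos : 0 < ∑ j ∈ F0, ((F0.card:ℝ)⁻¹) * Real.log (1 / a j z) :=
        Finset.sum_pos (fun j hj => mul_pos (by positivity) (hupos j z hz)) hF0ne
      have hK0 : 0 < Real.log (F0.card:ℝ) - Real.log c := sub_pos.2 (Real.log_lt_log hc hF0)
      rw [hs z hz]
      refine lt_of_lt_of_le (ENNReal.ofReal_pos.2 (div_pos hK0 hGupos)) (le_sInf ?_)
      rintro b ⟨α, ⟨hα, hαsum⟩, rfl⟩
      have hkey := key1 z hz F0 (fun _ => (F0.card:ℝ)⁻¹) (fun j _ => by positivity)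
        hsumF0 α (((hsumchar z hz α).1 hαsum) F0)
      rw [hentF0] at hkey
      exact ENNReal.ofReal_le_ofReal ((div_le_iff₀ hGupos).2 (by linarith))
    refine ⟨𝓚, h𝓚ne, h𝓚harm, h𝓚nonneg, ?_⟩
    intro z hz
    have himgne : ((fun h => h z) '' 𝓚).Nonempty := h𝓚ne.image _
    have himgbdd : BddBelow ((fun h => h z) '' 𝓚) :=
      ⟨0, fun y hy => by obtain ⟨h, hh, rfl⟩ := hy; exact h𝓚nonneg h hh z hz⟩
    have hlb : ∀ h ∈ 𝓚, ((s z)⁻¹).toReal ≤ h z := by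
      rintro h ⟨F, p, g, hp, hp1, hent, hgmem, rfl⟩
      have hK : 0 < (-∑ j ∈ F, p j * Real.log (p j)) - Real.log c := sub_pos.2 hent
      show ((s z)⁻¹).toReal ≤ (∑ j ∈ F, p j * g j z) /
        ((-∑ j ∈ F, p j * Real.log (p j)) - Real.log c)
      have hGz0 : 0 ≤ ∑ j ∈ F, p j * g j z := Finset.sum_nonneg fun j hj =>
        mul_nonneg (hp j hj) (hnonneg j (g j) (hgmem j hj) z hz)
      have hGuGz : (∑ j ∈ F, p j * Real.log (1 / a j z)) ≤ ∑ j ∈ F, p j * g j z :=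
        Finset.sum_le_sum fun j hj =>
          mul_le_mul_of_nonneg_left (hub j z hz (g j) (hgmem j hj)) (hp j hj)
      by_cases hAne : {α : ℝ | 0 < α ∧
          ∑' j, ENNReal.ofReal (a j z ^ α) ≤ ENNReal.ofReal c}.Nonempty
      · obtain ⟨α₀, hα₀⟩ := hAne
        have hkey : ∀ α : ℝ, (0 < α ∧
            ∑' j, ENNReal.ofReal (a j z ^ α) ≤ ENNReal.ofReal c) →
            (-∑ j ∈ F, p j * Real.log (p j)) - Real.log c ≤ α * ∑ j ∈ F, p j * g j z := by
          intro α hα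
          have h1 := key1 z hz F p hp hp1 α (((hsumchar z hz α).1 hα.2) F)
          have h2 : α * (∑ j ∈ F, p j * Real.log (1 / a j z)) ≤ α * ∑ j ∈ F, p j * g j z :=
            mul_le_mul_of_nonneg_left hGuGz hα.1.le
          linarith
        have hGzpos : 0 < ∑ j ∈ F, p j * g j z := by
          rcases lt_or_eq_of_le hGz0 with h | h
          · exact h
          · exfalso
            have := hkey α₀ hα₀
            rw [← h] at this
            simp at this
            linarith
        have hsge : ENNReal.ofReal
            (((-∑ j ∈ F, p j * Real.log (p j)) - Real.log c) / ∑ j ∈ F, p j * g j z)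
            ≤ s z := by
          rw [hs z hz]
          refine le_sInf ?_
          rintro b ⟨α, hα, rfl⟩
          exact ENNReal.ofReal_le_ofReal ((div_le_iff₀ hGzpos).2 (hkey α hα))
        have hinv : (s z)⁻¹ ≤ ENNReal.ofReal ((∑ j ∈ F, p j * g j z) /
            ((-∑ j ∈ F, p j * Real.log (p j)) - Real.log c)) := by
          have h2 : (s z)⁻¹ ≤ (ENNReal.ofReal
              (((-∑ j ∈ F, p j * Real.log (p j)) - Real.log c) / ∑ j ∈ F, p j * g j z))⁻¹ :=
            ENNReal.inv_le_inv.2 hsge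
          rwa [← ENNReal.ofReal_inv_of_pos (div_pos hK hGzpos), inv_div] at h2
        calc ((s z)⁻¹).toReal
            ≤ (ENNReal.ofReal ((∑ j ∈ F, p j * g j z) /
              ((-∑ j ∈ F, p j * Real.log (p j)) - Real.log c))).toReal :=
              ENNReal.toReal_mono ENNReal.ofReal_ne_top hinv
          _ = _ := ENNReal.toReal_ofReal (div_nonneg hGz0 hK.le)
      · have hstop : s z = ⊤ := by
          rw [hs z hz, Set.not_nonempty_iff_eq_empty.1 hAne]
          simp
        rw [hstop]
        simpa using div_nonneg hGz0 hK.le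
    have hub2 : ∀ ε : ℝ, 0 < ε → ∃ h ∈ 𝓚, h z ≤ ((s z)⁻¹).toReal + ε := by
      intro ε hε
      obtain ⟨α, hαpos, hαnotin, hαbound⟩ :
          ∃ α : ℝ, 0 < α ∧ ¬(∑' j, ENNReal.ofReal (a j z ^ α) ≤ ENNReal.ofReal c) ∧
            1/α ≤ ((s z)⁻¹).toReal + ε/2 := by
        by_cases hstop : s z = ⊤
        · refine ⟨2/ε, by positivity, ?_, ?_⟩
          · intro hcon
            have hle2 : s z ≤ ENNReal.ofReal (2/ε) := by
              rw [hs z hz]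
              exact sInf_le ⟨2/ε, ⟨by positivity, hcon⟩, rfl⟩
            rw [hstop, top_le_iff] at hle2
            exact ENNReal.ofReal_ne_top hle2
          · rw [hstop]
            simp only [ENNReal.inv_top, ENNReal.toReal_zero, zero_add]
            rw [one_div_div]
        · have hzpos := hspos z hz
          set t := (s z).toReal with htdef
          have hst : 0 < t := ENNReal.toReal_pos (ne_of_gt hzpos) hstop
          refine ⟨t / (1 + t * (ε/2)), by positivity, ?_, ?_⟩
          · intro hcon
            have hle2 : s z ≤ ENNReal.ofReal (t / (1 + t * (ε/2))) := by
              rw [hs z hz]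
              exact sInf_le ⟨_, ⟨by positivity, hcon⟩, rfl⟩
            have h4 := ENNReal.toReal_mono ENNReal.ofReal_ne_top hle2
            rw [ENNReal.toReal_ofReal (by positivity)] at h4
            rw [← htdef] at h4
            have hlt : t / (1 + t * (ε/2)) < t := div_lt_self hst (by nlinarith)
            linarith
          · have h1 : (1:ℝ)/(t / (1 + t * (ε/2))) = 1/t + ε/2 := by
              field_simp
            rw [h1, ENNReal.toReal_inv, htdef, one_div]
      have hexF : ∃ F : Finset ι, c < ∑ j ∈ F, a j z ^ α := by
        by_contra hcon
        push_neg at hcon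
        exact hαnotin ((hsumchar z hz α).2 fun F => hcon F)
      obtain ⟨F, hQc⟩ := hexF
      have hQpos : 0 < ∑ j ∈ F, a j z ^ α := hc.trans hQc
      have hFne : F.Nonempty := by
        rcases F.eq_empty_or_nonempty with h | h
        · exfalso
          rw [h] at hQpos
          simp at hQpos
        · exact h
      set p : ι → ℝ := fun j => a j z ^ α / ∑ j ∈ F, a j z ^ α with hpdef
      have hppos : ∀ j ∈ F, 0 < p j := fun j _ =>
        div_pos (Real.rpow_pos_of_pos (ha j z hz).1 α) hQpos
      have hp1 : ∑ j ∈ F, p j = 1 := by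
        rw [hpdef, ← Finset.sum_div, div_self (ne_of_gt hQpos)]
      have hGupos : 0 < ∑ j ∈ F, p j * Real.log (1 / a j z) :=
        Finset.sum_pos (fun j hj => mul_pos (hppos j hj) (hupos j z hz)) hFne
      have hent : -∑ j ∈ F, p j * Real.log (p j)
          = α * (∑ j ∈ F, p j * Real.log (1 / a j z)) + Real.log (∑ j ∈ F, a j z ^ α) := by
        have e : ∀ j ∈ F, p j * Real.log (p j)
            = p j * (α * Real.log (a j z)) - p j * Real.log (∑ j ∈ F, a j z ^ α) := by
          intro j hj
          rw [hpdef]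
          rw [Real.log_div (ne_of_gt (Real.rpow_pos_of_pos (ha j z hz).1 α)) (ne_of_gt hQpos),
            Real.log_rpow (ha j z hz).1]
          ring
        rw [Finset.sum_congr rfl e, Finset.sum_sub_distrib, ← Finset.sum_mul, hp1, one_mul]
        have e2 : ∑ j ∈ F, p j * (α * Real.log (a j z))
            = -(α * ∑ j ∈ F, p j * Real.log (1 / a j z)) := by
          rw [Finset.mul_sum, ← Finset.sum_neg_distrib]
          refine Finset.sum_congr rfl fun j hj => ?_
          rw [one_div, Real.log_inv]
          ring
        rw [e2]
        ring
      have hlogQc : Real.log c < Real.log (∑ j ∈ F, a j z ^ α) := Real.log_lt_log hc hQc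
      have hentc : Real.log c < -∑ j ∈ F, p j * Real.log (p j) := by
        rw [hent]
        nlinarith
      have hKpos : 0 < (-∑ j ∈ F, p j * Real.log (p j)) - Real.log c := sub_pos.2 hentc
      have hKge : α * (∑ j ∈ F, p j * Real.log (1 / a j z))
          ≤ (-∑ j ∈ F, p j * Real.log (p j)) - Real.log c := by
        rw [hent]
        linarith
      set δ := (ε/2) * ((-∑ j ∈ F, p j * Real.log (p j)) - Real.log c) with hδdef
      have hδpos : 0 < δ := by positivity
      have hgex : ∀ j, ∃ g, g ∈ 𝓗 j ∧ (j ∈ F → g z < Real.log (1 / a j z) + δ) := by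
        intro j
        by_cases hj : j ∈ F
        · obtain ⟨g, hg, hlt⟩ := happrox j z hz δ hδpos
          exact ⟨g, hg, fun _ => hlt⟩
        · exact ⟨(hne𝓗 j).some, (hne𝓗 j).some_mem, fun h => absurd h hj⟩
      choose g hg𝓗 hgclose using hgex
      refine ⟨_, ⟨F, p, g, fun j hj => (hppos j hj).le, hp1, hentc,
        fun j _ => hg𝓗 j, rfl⟩, ?_⟩
      have hv1 : ∑ j ∈ F, p j * g j z ≤ (∑ j ∈ F, p j * Real.log (1 / a j z)) + δ := by
        calc ∑ j ∈ F, p j * g j z ≤ ∑ j ∈ F, p j * (Real.log (1 / a j z) + δ) :=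
              Finset.sum_le_sum fun j hj =>
                mul_le_mul_of_nonneg_left (hgclose j hj).le (hppos j hj).le
          _ = (∑ j ∈ F, p j * Real.log (1 / a j z)) + δ := by
              simp only [mul_add]
              rw [Finset.sum_add_distrib, ← Finset.sum_mul, hp1, one_mul]
      have hGuK : (∑ j ∈ F, p j * Real.log (1 / a j z)) /
          ((-∑ j ∈ F, p j * Real.log (p j)) - Real.log c) ≤ 1 / α := by
        rw [div_le_div_iff₀ hKpos hαpos]
        rw [one_mul, mul_comm]
        exact hKge
      have hδK : δ / ((-∑ j ∈ F, p j * Real.log (p j)) - Real.log c) = ε/2 := by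
        rw [hδdef]
        field_simp
      show (∑ j ∈ F, p j * g j z) /
          ((-∑ j ∈ F, p j * Real.log (p j)) - Real.log c) ≤ ((s z)⁻¹).toReal + ε
      calc (∑ j ∈ F, p j * g j z) /
            ((-∑ j ∈ F, p j * Real.log (p j)) - Real.log c)
          ≤ ((∑ j ∈ F, p j * Real.log (1 / a j z)) + δ) /
            ((-∑ j ∈ F, p j * Real.log (p j)) - Real.log c) :=
            (div_le_div_iff_of_pos_right hKpos).2 hv1
        _ = (∑ j ∈ F, p j * Real.log (1 / a j z)) /
            ((-∑ j ∈ F, p j * Real.log (p j)) - Real.log c) +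
            δ / ((-∑ j ∈ F, p j * Real.log (p j)) - Real.log c) := add_div _ _ _
        _ ≤ 1/α + ε/2 := by rw [hδK]; linarith
        _ ≤ ((s z)⁻¹).toReal + ε := by linarith
    show ((s z)⁻¹).toReal = sInf ((fun h => h z) '' 𝓚)
    refine le_antisymm (le_csInf himgne ?_) ?_
    · rintro b ⟨h, hh, rfl⟩
      exact hlb h hh
    · by_contra hcon
      push_neg at hcon
      obtain ⟨h, hh, hhv⟩ := hub2 ((sInf ((fun h => h z) '' 𝓚) - ((s z)⁻¹).toReal)/2)
        (by linarith)
      have := csInf_le himgbdd ⟨h, hh, rfl⟩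
      linarith
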